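/- Let (Ω, 𝒫) be a probability space and A₁, A₂, … a sequence of events such that there exists ε > 0 with limsup_{n→∞} 𝒫(Aₙ | A₁ᶜ ∩ … ∩ Aₜᶜ) > ε for every t ∈ ℕ (whenever the conditioning event has positive probability). Then 𝒫(⋃_{i=1}^n Aᵢ) → 1 as n → ∞. -/

import Mathlib

open MeasureTheory ProbabilityTheory Filter
open scoped ENNReal

/-- Lévy-type lemma: if there is `ε > 0` such that for every `t`, either the
conditioning event `A₁ᶜ ∩ … ∩ Aₜᶜ` is null (in which case the conclusion is
trivial from that index on) or
`limsup_{n→∞} 𝒫(Aₙ | A₁ᶜ ∩ … ∩ Aₜᶜ) > ε`, then `𝒫(⋃_{i=1}^n Aᵢ) → 1`. -/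
theorem stmt2 {Ω : Type*} [MeasurableSpace Ω] (μ : Measure Ω) [IsProbabilityMeasure μ]
    (A : ℕ → Set Ω) (hA : ∀ i, MeasurableSet (A i)) (ε : ℝ) (hε : 0 < ε)
    (h : ∀ t : ℕ,
      μ (⋂ i ∈ Finset.Icc 1 t, (A i)ᶜ) = 0 ∨
      ENNReal.ofReal ε <
        Filter.limsup
          (fun n => ProbabilityTheory.cond μ (⋂ i ∈ Finset.Icc 1 t, (A i)ᶜ) (A n))
          Filter.atTop) :
    Filter.Tendsto (fun n => μ (⋃ i ∈ Finset.Icc 1 n, A i)) Filter.atTop (nhds 1) := by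
  set B : ℕ → Set Ω := fun t => ⋂ i ∈ Finset.Icc 1 t, (A i)ᶜ with hBdef
  have hBm : ∀ t, MeasurableSet (B t) := fun t =>
    MeasurableSet.biInter (Set.to_countable _) fun i _ => (hA i).compl
  have hBsub : ∀ {s t : ℕ}, s ≤ t → B t ⊆ B s := by
    intro s t hst
    intro x hx
    simp only [hBdef, Set.mem_iInter] at hx ⊢
    intro i hi
    exact hx i (by simp only [Finset.mem_Icc] at hi ⊢; omega)
  have hanti : Antitone fun t => μ (B t) := fun s t hst => measure_mono (hBsub hst)
  set L : ENNReal := ⨅ t, μ (B t) with hLdef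
  have hLle : ∀ t, L ≤ μ (B t) := fun t => iInf_le _ t
  have hLtop : L ≠ ∞ := fun htop => by
    have := hLle 0
    rw [htop] at this
    exact (measure_ne_top μ _) (top_le_iff.mp this)
  have hL0 : L = 0 := by
    by_contra hL
    set ε' : ENNReal := ENNReal.ofReal ε with hε'def
    have hε'0 : ε' ≠ 0 := (ENNReal.ofReal_pos.mpr hε).ne'
    have key : ∀ t, L + ε' * L ≤ μ (B t) := by
      intro t
      have hBt0 : μ (B t) ≠ 0 := fun h0 => hL (le_antisymm (h0 ▸ hLle t) zero_le)
      have hBttop : μ (B t) ≠ ∞ := measure_ne_top μ _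
      rcases h t with h0 | hls
      · exact absurd h0 hBt0
      -- get n ≥ max t 1 with ε' < cond μ (B t) (A n)
      rw [limsup_eq_iInf_iSup_of_nat] at hls
      have := lt_of_lt_of_le hls (iInf_le _ (max t 1))
      rw [lt_iSup_iff] at this
      obtain ⟨n, hn⟩ := this
      rw [lt_iSup_iff] at hn
      obtain ⟨hnt, hcond⟩ := hn
      rw [cond_apply (hBm t)] at hcond
      have hmul : ε' * μ (B t) < μ (B t ∩ A n) := by
        rw [← ENNReal.div_eq_inv_mul] at hcond
        exact (ENNReal.lt_div_iff_mul_lt (Or.inl hBt0) (Or.inl hBttop)).mp hcond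
      have hBnsub : B n ⊆ B t \ A n := by
        intro x hx
        refine ⟨hBsub (le_trans (le_max_left t 1) hnt) hx, ?_⟩
        have : x ∈ (A n)ᶜ := by
          have hn1 : 1 ≤ n := le_trans (le_max_right t 1) hnt
          exact Set.mem_iInter₂.mp hx n (by simp [hn1])
        exact this
      calc L + ε' * L ≤ μ (B t \ A n) + μ (B t ∩ A n) := by
            refine add_le_add ?_ ?_
            · exact le_trans (hLle n) (measure_mono hBnsub)
            · exact le_trans (mul_le_mul_right (hLle t) ε') hmul.le
        _ = μ (B t) := by rw [add_comm]; exact measure_inter_add_diff _ (hA n)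
    have : L + ε' * L ≤ L := le_iInf key
    have hlt : L < L + ε' * L :=
      ENNReal.lt_add_right hLtop (by
        simp only [ne_eq, mul_eq_zero, not_or]
        exact ⟨hε'0, hL⟩)
    exact absurd (lt_of_lt_of_le hlt this) (lt_irrefl L)
  have htend0 : Tendsto (fun t => μ (B t)) atTop (nhds 0) := by
    have := tendsto_atTop_iInf hanti
    rwa [← hLdef, hL0] at this
  have heq : ∀ n, μ (⋃ i ∈ Finset.Icc 1 n, A i) = 1 - μ (B n) := by
    intro n
    have : (⋃ i ∈ Finset.Icc 1 n, A i) = (B n)ᶜ := by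
      simp [hBdef, Set.compl_iInter]
    rw [this, prob_compl_eq_one_sub (hBm n)]
  simp only [heq]
  have : Tendsto (fun n => (1 : ENNReal) - μ (B n)) atTop (nhds (1 - 0)) :=
    ENNReal.Tendsto.sub tendsto_const_nhds htend0 (Or.inl ENNReal.one_ne_top)
  simpa using this
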